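/- arXiv:1710.01044 — 7 statements merged into one kernel-verified Lean document; each statement's English description precedes it below -/
import Mathlib

section
/- Every bounded independent sequence of real-valued functions on a set X is an l1-sequence: there exists a constant a > 0 such that for all n and all real scalars c_1,...,c_n, a·∑|c_i| ≤ ‖∑ c_i f_i‖_∞. -/
/-- A sequence of real-valued functions on a set `X` is *independent* if there exist
reals `a < b` such that for all finite disjoint `P, M ⊆ ℕ` the corresponding
intersection of preimages is nonempty. -/
def IndepSeq {X : Type*} (f : ℕ → X → ℝ) : Prop :=
  ∃ a b : ℝ, a < b ∧ ∀ P M : Finset ℕ, Disjoint P M →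
    ∃ x : X, (∀ n ∈ P, f n x < a) ∧ (∀ n ∈ M, b < f n x)

/-- Every bounded independent sequence of real-valued functions is an `l₁`-sequence. -/
theorem bounded_independent_is_l1_sequence {X : Type*} (f : ℕ → X → ℝ)
    (hb : ∃ C : ℝ, ∀ n x, |f n x| ≤ C) (hind : IndepSeq f) :
    ∃ a : ℝ, 0 < a ∧ ∀ (n : ℕ) (c : ℕ → ℝ),
      a * ∑ i ∈ Finset.range n, |c i| ≤ ⨆ x : X, |∑ i ∈ Finset.range n, c i * f i x| := by
  obtain ⟨C, hC⟩ := hb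
  obtain ⟨a, b, hab, hPM⟩ := hind
  refine ⟨(b - a) / 2, by linarith, ?_⟩
  intro n c
  set S : X → ℝ := fun x => ∑ i ∈ Finset.range n, c i * f i x with hS
  have hbdd : BddAbove (Set.range fun x => |S x|) := by
    refine ⟨∑ i ∈ Finset.range n, |c i| * C, ?_⟩
    rintro _ ⟨x, rfl⟩
    calc |S x| ≤ ∑ i ∈ Finset.range n, |c i * f i x| := Finset.abs_sum_le_sum_abs _ _
      _ ≤ ∑ i ∈ Finset.range n, |c i| * C := by
          apply Finset.sum_le_sum
          intro i _
          rw [abs_mul]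
          exact mul_le_mul_of_nonneg_left (hC i x) (abs_nonneg _)
  have hdisj1 : Disjoint ((Finset.range n).filter (fun i => c i < 0))
      ((Finset.range n).filter (fun i => 0 ≤ c i)) := by
    rw [Finset.disjoint_left]
    intro i hi hi'
    simp only [Finset.mem_filter] at hi hi'
    linarith [hi.2, hi'.2]
  have hdisj2 : Disjoint ((Finset.range n).filter (fun i => 0 ≤ c i))
      ((Finset.range n).filter (fun i => c i < 0)) := hdisj1.symm
  obtain ⟨x₁, hx₁a, hx₁b⟩ := hPM _ _ hdisj1
  obtain ⟨x₂, hx₂a, hx₂b⟩ := hPM _ _ hdisj2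
  have key : ∀ i ∈ Finset.range n, (b - a) * |c i| ≤ c i * f i x₁ - c i * f i x₂ := by
    intro i hi
    rcases lt_or_ge (c i) 0 with h | h
    · have h1 : f i x₁ < a := hx₁a i (by simp [Finset.mem_filter, hi, h])
      have h2 : b < f i x₂ := hx₂b i (by simp [Finset.mem_filter, hi, h])
      rw [abs_of_neg h]
      nlinarith
    · have h1 : b < f i x₁ := hx₁b i (by simp [Finset.mem_filter, hi, h])
      have h2 : f i x₂ < a := hx₂a i (by simp [Finset.mem_filter, hi, h])
      rw [abs_of_nonneg h]
      nlinarith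
  have hsum : (b - a) * ∑ i ∈ Finset.range n, |c i| ≤ S x₁ - S x₂ := by
    rw [hS]
    simp only
    rw [← Finset.sum_sub_distrib, Finset.mul_sum]
    exact Finset.sum_le_sum key
  have h1 : |S x₁| ≤ ⨆ x : X, |S x| := le_ciSup hbdd x₁
  have h2 : |S x₂| ≤ ⨆ x : X, |S x| := le_ciSup hbdd x₂
  have h3 : S x₁ - S x₂ ≤ |S x₁| + |S x₂| := by
    have := abs_le.mp (le_refl |S x₁|)
    have := abs_le.mp (le_refl |S x₂|)
    linarith [le_abs_self (S x₁), neg_abs_le (S x₂)]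
  linarith
end

section
/- Let {f_n} be a bounded sequence of continuous real-valued functions on a topological space X, and let Y be a dense subset of X. Then {f_n} is an independent sequence on X if and only if the sequence of restrictions {f_n|_Y} is an independent sequence on Y. -/
/-- For a bounded sequence of continuous functions on `X` and a dense subset `Y ⊆ X`,
`{fₙ}` is independent on `X` iff the restrictions `{fₙ|_Y}` are independent on `Y`. -/
theorem indep_iff_indep_restrict_dense {X : Type*} [TopologicalSpace X]
    (f : ℕ → X → ℝ) (hc : ∀ n, Continuous (f n)) (hb : ∃ C : ℝ, ∀ n x, |f n x| ≤ C)
    (Y : Set X) (hY : Dense Y) :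
    IndepSeq f ↔ IndepSeq (fun n (y : Y) => f n y) := by
  constructor
  · rintro ⟨a, b, hab, h⟩
    refine ⟨a, b, hab, fun P M hPM => ?_⟩
    obtain ⟨x, hxP, hxM⟩ := h P M hPM
    set U : Set X := (⋂ n ∈ P, {x | f n x < a}) ∩ (⋂ n ∈ M, {x | b < f n x}) with hU
    have hUopen : IsOpen U := by
      apply IsOpen.inter
      · exact isOpen_biInter_finset fun n _ => isOpen_lt (hc n) continuous_const
      · exact isOpen_biInter_finset fun n _ => isOpen_lt continuous_const (hc n)
    have hxU : x ∈ U := by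
      constructor
      · exact Set.mem_biInter fun n hn => hxP n hn
      · exact Set.mem_biInter fun n hn => hxM n hn
    obtain ⟨y, hyY, hyU⟩ := hY.exists_mem_open hUopen ⟨x, hxU⟩
    refine ⟨⟨y, hyY⟩, fun n hn => ?_, fun n hn => ?_⟩
    · exact Set.mem_iInter₂.mp hyU.1 n hn
    · exact Set.mem_iInter₂.mp hyU.2 n hn
  · rintro ⟨a, b, hab, h⟩
    refine ⟨a, b, hab, fun P M hPM => ?_⟩
    obtain ⟨y, hyP, hyM⟩ := h P M hPM
    exact ⟨y, hyP, hyM⟩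
end

section
/- Let α : X → X' be a continuous surjection between compact Hausdorff spaces, (Y, μ) a uniform space, and f : X → Y, f' : X' → Y maps with f' ∘ α = f. Then f is fragmented if and only if f' is fragmented. -/
/-- A map `f : X → Y` from a topological space to a uniform space is *fragmented*
if for every nonempty `A ⊆ X` and every entourage `ε` there is an open `O` with
`O ∩ A ≠ ∅` and `f (O ∩ A)` ε-small. -/
def Fragmented {X Y : Type*} [TopologicalSpace X] [UniformSpace Y] (f : X → Y) : Prop :=
  ∀ A : Set X, A.Nonempty → ∀ ε ∈ uniformity Y, ∃ O : Set X, IsOpen O ∧ (O ∩ A).Nonempty ∧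
    ∀ x ∈ O ∩ A, ∀ y ∈ O ∩ A, (f x, f y) ∈ ε

/-- For a continuous surjection `α : X → X'` of compact Hausdorff spaces and maps
`f : X → Y`, `f' : X' → Y` with `f' ∘ α = f`, `f` is fragmented iff `f'` is fragmented. -/
theorem fragmented_iff_of_quotient {X X' Y : Type*} [TopologicalSpace X] [CompactSpace X]
    [T2Space X] [TopologicalSpace X'] [CompactSpace X'] [T2Space X'] [UniformSpace Y]
    (α : X → X') (hα : Continuous α) (hαs : Function.Surjective α)
    (f : X → Y) (f' : X' → Y) (h : f' ∘ α = f) :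
    Fragmented f ↔ Fragmented f' := by
  have hfa : ∀ x, f' (α x) = f x := fun x => congrFun h x
  constructor
  · intro hf A' hA' ε hε
    set C := closure A' with hCdef
    have hCcl : IsClosed C := isClosed_closure
    have hCne : C.Nonempty := hA'.closure
    set S : Set (Set X) := {B | IsClosed B ∧ α '' B = C} with hSdef
    have hA0 : α ⁻¹' C ∈ S := ⟨hCcl.preimage hα, Set.image_preimage_eq C hαs⟩
    obtain ⟨B, -, hBmem, hBmin⟩ := zorn_superset_nonempty S (fun c hcS hc hcne => by
      refine ⟨⋂₀ c, ⟨isClosed_sInter fun B hB => (hcS hB).1, ?_⟩, fun s hs => Set.sInter_subset_of_mem hs⟩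
      apply Set.Subset.antisymm
      · obtain ⟨B0, hB0⟩ := hcne
        exact (Set.image_mono (f := α) (Set.sInter_subset_of_mem hB0)).trans (hcS hB0).2.subset
      · intro a' ha'
        set T : Set (Set X) := (fun B => B ∩ α ⁻¹' {a'}) '' c with hTdef
        have hTne : Nonempty T := by
          obtain ⟨B0, hB0⟩ := hcne
          exact ⟨⟨_, Set.mem_image_of_mem _ hB0⟩⟩
        have hmem : ∀ U ∈ T, U.Nonempty := by
          rintro _ ⟨B, hB, rfl⟩
          have : a' ∈ α '' B := (hcS hB).2 ▸ ha'
          obtain ⟨x, hx, rfl⟩ := this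
          exact ⟨x, hx, rfl⟩
        have hcl : ∀ U ∈ T, IsClosed U := by
          rintro _ ⟨B, hB, rfl⟩
          exact ((hcS hB).1).inter (isClosed_singleton.preimage hα)
        have hdir : DirectedOn (· ⊇ ·) T := by
          rintro _ ⟨B1, hB1, rfl⟩ _ ⟨B2, hB2, rfl⟩
          rcases hc.total hB1 hB2 with h12 | h21
          · exact ⟨_, Set.mem_image_of_mem _ hB1, le_refl _,
              Set.inter_subset_inter_left _ h12⟩
          · exact ⟨_, Set.mem_image_of_mem _ hB2, Set.inter_subset_inter_left _ h21, le_refl _⟩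
        obtain ⟨x, hx⟩ := IsCompact.nonempty_sInter_of_directed_nonempty_isCompact_isClosed
          hdir hmem (fun U hU => (hcl U hU).isCompact) hcl
        refine ⟨x, ?_, ?_⟩
        · intro B hB
          exact ((hx _) (Set.mem_image_of_mem _ hB)).1
        · obtain ⟨B0, hB0⟩ := hcne
          exact ((hx _) (Set.mem_image_of_mem _ hB0)).2) (α ⁻¹' C) hA0
    obtain ⟨hBcl, hBim⟩ := hBmem
    have hBne : B.Nonempty := by
      obtain ⟨a', ha'⟩ := hCne
      obtain ⟨x, hx, -⟩ := hBim ▸ ha'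
      exact ⟨x, hx⟩
    obtain ⟨O, hOopen, hOBne, hOsmall⟩ := hf B hBne ε hε
    -- O' = complement of α '' (B \ O)
    set O' : Set X' := (α '' (B \ O))ᶜ with hO'def
    have hO'open : IsOpen O' :=
      (hα.isClosedMap _ (hBcl.sdiff hOopen)).isOpen_compl
    -- minimality gives a point of C outside α '' (B \ O)
    have hnot : ¬ α '' (B \ O) = C := by
      intro heq
      have hBO : B ⊆ B \ O := hBmin ⟨hBcl.sdiff hOopen, heq⟩ Set.diff_subset
      obtain ⟨x, hxO, hxB⟩ := hOBne
      exact (hBO hxB).2 hxO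
    have hsub : α '' (B \ O) ⊆ C := hBim ▸ Set.image_mono (f := α) Set.diff_subset
    obtain ⟨a', ha'C, ha'n⟩ : ∃ a' ∈ C, a' ∉ α '' (B \ O) := by
      by_contra hcon
      push_neg at hcon
      exact hnot (Set.Subset.antisymm hsub hcon)
    refine ⟨O', hO'open, ?_, ?_⟩
    · -- a' ∈ closure A' and a' ∈ O' open, so O' meets A'
      have := mem_closure_iff.mp ha'C O' hO'open ha'n
      obtain ⟨b, hb1, hb2⟩ := this
      exact ⟨b, hb1, hb2⟩
    · intro x' hx' y' hy'
      have key : ∀ z' ∈ O' ∩ A', ∃ b ∈ O ∩ B, α b = z' := by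
        rintro z' ⟨hz1, hz2⟩
        have : z' ∈ α '' B := hBim ▸ subset_closure hz2
        obtain ⟨b, hbB, rfl⟩ := this
        have : b ∉ B \ O := fun hb => hz1 (Set.mem_image_of_mem α hb)
        have hbO : b ∈ O := by
          by_contra hbo
          exact this ⟨hbB, hbo⟩
        exact ⟨b, ⟨hbO, hbB⟩, rfl⟩
      obtain ⟨b, hb, rfl⟩ := key x' hx'
      obtain ⟨c, hc, rfl⟩ := key y' hy'
      rw [hfa, hfa]
      exact hOsmall b hb c hc
  · intro hf' A hA ε hε
    obtain ⟨O', hO'open, hO'ne, hO'small⟩ := hf' (α '' A) (hA.image α) ε hε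
    refine ⟨α ⁻¹' O', hO'open.preimage hα, ?_, ?_⟩
    · obtain ⟨a', ha'O, x, hxA, rfl⟩ := hO'ne
      exact ⟨x, ha'O, hxA⟩
    · rintro x ⟨hx1, hx2⟩ y ⟨hy1, hy2⟩
      have := hO'small (α x) ⟨hx1, Set.mem_image_of_mem α hx2⟩
        (α y) ⟨hy1, Set.mem_image_of_mem α hy2⟩
      rwa [hfa, hfa] at this
end

section
/- If X is a hereditarily Baire topological space (e.g., compact Hausdorff or Polish) and (Y,d) is a pseudometric space, then a map f : X → Y is fragmented if and only if f has the point of continuity property. -/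
/-- A map `f : X → Y` to a pseudometric space is *fragmented* if for every nonempty
`A ⊆ X` and every `ε > 0` there is an open `O` with `O ∩ A ≠ ∅` and `f (O ∩ A)` of
diameter less than `ε`. -/
def FragmentedMetric {X Y : Type*} [TopologicalSpace X] [PseudoMetricSpace Y]
    (f : X → Y) : Prop :=
  ∀ A : Set X, A.Nonempty → ∀ ε : ℝ, 0 < ε → ∃ O : Set X, IsOpen O ∧ (O ∩ A).Nonempty ∧
    ∀ x ∈ O ∩ A, ∀ y ∈ O ∩ A, dist (f x) (f y) < ε

/-- On a hereditarily Baire space, a map into a pseudometric space is fragmented iff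
it has the point of continuity property. -/
theorem fragmented_iff_pcp_of_hereditarilyBaire {X Y : Type*} [TopologicalSpace X]
    [PseudoMetricSpace Y]
    (hhb : ∀ A : Set X, IsClosed A → A.Nonempty → BaireSpace A)
    (f : X → Y) :
    FragmentedMetric f ↔
      ∀ A : Set X, IsClosed A → A.Nonempty → ∃ x ∈ A, ContinuousWithinAt f A x := by
  constructor
  · intro hfrag A hAc hAne
    haveI : BaireSpace A := hhb A hAc hAne
    haveI : Nonempty A := hAne.to_subtype
    -- the sets of points of small oscillation
    set G : ℕ → Set A := fun n => {x | ∃ O : Set X, IsOpen O ∧ (x : X) ∈ O ∧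
      ∀ y ∈ O ∩ A, ∀ z ∈ O ∩ A, dist (f y) (f z) < 1 / (n + 1)} with hG
    have hGopen : ∀ n, IsOpen (G n) := by
      intro n
      rw [isOpen_iff_forall_mem_open]
      rintro x ⟨O, hO, hxO, hsmall⟩
      exact ⟨Subtype.val ⁻¹' O, fun y hy => ⟨O, hO, hy, hsmall⟩,
        hO.preimage continuous_subtype_val, hxO⟩
    have hGdense : ∀ n, Dense (G n) := by
      intro n
      rw [dense_iff_inter_open]
      rintro U hU ⟨u, huU⟩
      obtain ⟨V, hV, rfl⟩ := isOpen_induced_iff.mp hU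
      have hVA : (V ∩ A).Nonempty := ⟨u, huU, u.2⟩
      have hpos : (0 : ℝ) < 1 / (n + 1) := by positivity
      obtain ⟨O, hO, ⟨w, hwO, hwV, hwA⟩, hsmall⟩ := hfrag (V ∩ A) hVA _ hpos
      refine ⟨⟨w, hwA⟩, hwV, O ∩ V, hO.inter hV, ⟨hwO, hwV⟩, ?_⟩
      intro y ⟨⟨hyO, hyV⟩, hyA⟩ z ⟨⟨hzO, hzV⟩, hzA⟩
      exact hsmall y ⟨hyO, hyV, hyA⟩ z ⟨hzO, hzV, hzA⟩
    obtain ⟨x, hx⟩ := (dense_iInter_of_isOpen hGopen hGdense).nonempty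
    simp only [Set.mem_iInter] at hx
    refine ⟨x, x.2, ?_⟩
    rw [Metric.continuousWithinAt_iff']
    intro ε hε
    obtain ⟨n, hn⟩ := exists_nat_one_div_lt hε
    obtain ⟨O, hO, hxO, hsmall⟩ := hx n
    filter_upwards [nhdsWithin_le_nhds (hO.mem_nhds hxO), self_mem_nhdsWithin]
      with y hyO hyA
    exact lt_trans (hsmall y ⟨hyO, hyA⟩ x ⟨hxO, x.2⟩) hn
  · intro hpcp A hAne ε hε
    obtain ⟨x, hxA, hx⟩ := hpcp (closure A) isClosed_closure (hAne.mono subset_closure)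
    have : {y | dist (f y) (f x) < ε / 2} ∈ nhdsWithin x (closure A) :=
      hx (Metric.ball_mem_nhds _ (by linarith))
    rw [mem_nhdsWithin] at this
    obtain ⟨O, hO, hxO, hsub⟩ := this
    have hOA : (O ∩ A).Nonempty := mem_closure_iff.mp hxA O hO hxO
    refine ⟨O, hO, hOA, ?_⟩
    intro y ⟨hyO, hyA⟩ z ⟨hzO, hzA⟩
    have hy := hsub ⟨hyO, subset_closure hyA⟩
    have hz := hsub ⟨hzO, subset_closure hzA⟩
    calc dist (f y) (f z) ≤ dist (f y) (f x) + dist (f x) (f z) := dist_triangle _ _ _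
    _ < ε := by simp only [Set.mem_setOf_eq] at hy hz; rw [dist_comm (f x) (f z)]; linarith
end

section
/- If X is a Polish space and Y a separable metric space, then f : X → Y is fragmented if and only if f is of Baire class 1 (the preimage of every open set is an F_σ set). -/
open Set TopologicalSpace

/-- Auxiliary notion: a set is a countable union of closed sets. -/
def AuxFsigma {X : Type*} [TopologicalSpace X] (s : Set X) : Prop :=
  ∃ g : ℕ → Set X, (∀ n, IsClosed (g n)) ∧ s = ⋃ n, g n

lemma auxFsigma_of_isClosed {X : Type*} [TopologicalSpace X] {s : Set X} (hs : IsClosed s) :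
    AuxFsigma s :=
  ⟨fun _ => s, fun _ => hs, (Set.iUnion_const s).symm⟩

lemma auxFsigma_iUnion {X : Type*} [TopologicalSpace X] {t : ℕ → Set X}
    (ht : ∀ n, AuxFsigma (t n)) : AuxFsigma (⋃ n, t n) := by
  choose g hgc hgu using ht
  let e : ℕ ≃ ℕ × ℕ := (Denumerable.eqv (ℕ × ℕ)).symm
  refine ⟨fun m => g (e m).1 (e m).2, fun m => hgc _ _, ?_⟩
  have h1 : ⋃ m, g (e m).1 (e m).2 = ⋃ p : ℕ × ℕ, g p.1 p.2 :=
    e.surjective.iUnion_comp (g := fun p : ℕ × ℕ => g p.1 p.2)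
  have h2 : ⋃ p : ℕ × ℕ, g p.1 p.2 = ⋃ n, ⋃ k, g n k :=
    Set.iUnion_prod' fun p : ℕ × ℕ => g p.1 p.2
  rw [h1, h2]
  exact iUnion_congr hgu

lemma auxFsigma_of_isOpen {Z : Type*} [PseudoMetricSpace Z] {s : Set Z} (hs : IsOpen s) :
    AuxFsigma s := by
  obtain ⟨T, hTo, hTc, hTeq⟩ := hs.isClosed_compl.isGδ
  rcases T.eq_empty_or_nonempty with rfl | hne
  · refine ⟨fun _ => ∅, fun _ => isClosed_empty, ?_⟩
    have h1 : sᶜ = univ := by simpa using hTeq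
    rw [← compl_compl s, h1, compl_univ, Set.iUnion_empty]
  · obtain ⟨u, rfl⟩ := hTc.exists_eq_range hne
    refine ⟨fun n => (u n)ᶜ, fun n => (hTo _ ⟨n, rfl⟩).isClosed_compl, ?_⟩
    rw [← compl_compl s, hTeq, sInter_range, compl_iInter]

lemma auxFsigma_of_isOpen' {X : Type*} [TopologicalSpace X] [PolishSpace X] {s : Set X}
    (hs : IsOpen s) : AuxFsigma s := by
  letI := TopologicalSpace.upgradeIsCompletelyMetrizable X
  exact auxFsigma_of_isOpen hs

lemma auxFsigma_inter_closed {X : Type*} [TopologicalSpace X] {s C : Set X} (hs : AuxFsigma s)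
    (hC : IsClosed C) : AuxFsigma (s ∩ C) := by
  obtain ⟨g, hgc, rfl⟩ := hs
  exact ⟨fun n => g n ∩ C, fun n => (hgc n).inter hC, Set.iUnion_inter C g⟩

lemma polish_baireSpace {Z : Type*} [TopologicalSpace Z] [PolishSpace Z] : BaireSpace Z := by
  letI := TopologicalSpace.upgradeIsCompletelyMetrizable Z
  exact BaireSpace.of_completelyPseudoMetrizable

/-- Key covering lemma: a fragmented map admits, for every `ε > 0`, a countable cover of the
space by locally closed pieces on which `f` has oscillation `< ε`. -/
lemma fragmented_exists_cover {X Y : Type*} [TopologicalSpace X] [SecondCountableTopology X]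
    [PseudoMetricSpace Y] {f : X → Y} (hf : FragmentedMetric f) {ε : ℝ} (hε : 0 < ε) :
    ∃ P : ℕ → Set X, (⋃ n, P n) = univ ∧
      ∀ n, (∃ O C, IsOpen O ∧ IsClosed C ∧ P n = O ∩ C) ∧
        ∀ x ∈ P n, ∀ y ∈ P n, dist (f x) (f y) < ε := by
  classical
  set Piece : Set X → Prop := fun p =>
    (∃ O C, IsOpen O ∧ IsClosed C ∧ p = O ∩ C) ∧
      ∀ x ∈ p, ∀ y ∈ p, dist (f x) (f y) < ε with hPiece
  have piece_empty : Piece ∅ :=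
    ⟨⟨∅, ∅, isOpen_empty, isClosed_empty, (Set.empty_inter ∅).symm⟩, by simp⟩
  set Good : Set X → Prop := fun G =>
    IsOpen G ∧ ∃ p : ℕ → Set X, (∀ n, Piece (p n)) ∧ G ⊆ ⋃ n, p n with hGoodDef
  set G : Set X := ⋃ g : {g : Set X // Good g}, (g : Set X) with hG
  have hGopen : IsOpen G := isOpen_iUnion fun g => g.2.1
  have hGgood : Good G := by
    refine ⟨hGopen, ?_⟩
    obtain ⟨T, hTc, hTU⟩ := isOpen_iUnion_countable (fun g : {g : Set X // Good g} => (g : Set X))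
      (fun g => g.2.1)
    rcases T.eq_empty_or_nonempty with rfl | hne
    · refine ⟨fun _ => ∅, fun _ => piece_empty, ?_⟩
      rw [hG, ← hTU]
      simp
    · obtain ⟨u, rfl⟩ := hTc.exists_eq_range hne
      choose p hp hpcov using fun n => (u n).2.2
      let e := Denumerable.eqv (ℕ × ℕ)
      refine ⟨fun m => p (e.symm m).1 (e.symm m).2, fun m => hp _ _, ?_⟩
      intro x hx
      rw [hG, ← hTU, biUnion_range] at hx
      obtain ⟨n, hn⟩ := mem_iUnion.1 hx
      obtain ⟨k, hk⟩ := mem_iUnion.1 (hpcov n hn)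
      refine mem_iUnion.2 ⟨e (n, k), ?_⟩
      rw [e.symm_apply_apply]
      exact hk
  have hGuniv : G = univ := by
    by_contra hne
    have hA : Gᶜ.Nonempty := by
      rw [nonempty_compl]
      exact hne
    obtain ⟨O, hO, hOA, hsmall⟩ := hf Gᶜ hA ε hε
    have hgood2 : Good (G ∪ O) := by
      refine ⟨hGopen.union hO, ?_⟩
      obtain ⟨p, hp, hpcov⟩ := hGgood.2
      refine ⟨fun n => Nat.casesOn n (O ∩ Gᶜ) p, fun n => ?_, ?_⟩
      · cases n with
        | zero => exact ⟨⟨O, Gᶜ, hO, hGopen.isClosed_compl, rfl⟩, hsmall⟩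
        | succ k => exact hp k
      · intro x hx
        by_cases hxG : x ∈ G
        · obtain ⟨k, hk⟩ := mem_iUnion.1 (hpcov hxG)
          exact mem_iUnion.2 ⟨k + 1, hk⟩
        · rcases hx with hx | hx
          · exact absurd hx hxG
          · exact mem_iUnion.2 ⟨0, ⟨hx, hxG⟩⟩
    have hsub : G ∪ O ⊆ G :=
      subset_iUnion (fun g : {g : Set X // Good g} => (g : Set X)) ⟨G ∪ O, hgood2⟩
    obtain ⟨x, hxO, hxA⟩ := hOA
    exact hxA (hsub (Or.inr hxO))
  obtain ⟨p, hp, hpcov⟩ := hGgood.2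
  refine ⟨p, ?_, fun n => hp n⟩
  apply eq_univ_of_forall
  intro x
  exact hpcov (by rw [hGuniv]; trivial)

/-- For a Polish space `X` and a separable metric space `Y`, `f : X → Y` is fragmented
iff `f` is of Baire class 1 (preimages of open sets are `F_σ`). -/
theorem fragmented_iff_baire_class_one {X Y : Type*} [TopologicalSpace X] [PolishSpace X]
    [MetricSpace Y] [TopologicalSpace.SeparableSpace Y] (f : X → Y) :
    FragmentedMetric f ↔
      ∀ U : Set Y, IsOpen U → ∃ g : ℕ → Set X, (∀ n, IsClosed (g n)) ∧ f ⁻¹' U = ⋃ n, g n := by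
  constructor
  · intro hf U hU
    classical
    have hcov : ∀ n : ℕ, ∃ P : ℕ → Set X, (⋃ k, P k) = univ ∧
        ∀ k, (∃ O C, IsOpen O ∧ IsClosed C ∧ P k = O ∩ C) ∧
          ∀ x ∈ P k, ∀ y ∈ P k, dist (f x) (f y) < 1 / (n + 1) := fun n =>
      fragmented_exists_cover hf (by positivity)
    choose P hPu hP using hcov
    have key : f ⁻¹' U = ⋃ n, ⋃ k, (if P n k ⊆ f ⁻¹' U then P n k else ∅) := by
      apply Subset.antisymm
      · intro x hx
        obtain ⟨r, hr, hball⟩ := Metric.isOpen_iff.1 hU (f x) hx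
        obtain ⟨n, hn⟩ := exists_nat_one_div_lt hr
        have hxk : x ∈ ⋃ k, P n k := by rw [hPu n]; trivial
        obtain ⟨k, hk⟩ := mem_iUnion.1 hxk
        have hsub : P n k ⊆ f ⁻¹' U := by
          intro z hz
          apply hball
          rw [Metric.mem_ball]
          exact lt_trans ((hP n k).2 z hz x hk) hn
        refine mem_iUnion.2 ⟨n, mem_iUnion.2 ⟨k, ?_⟩⟩
        rw [if_pos hsub]
        exact hk
      · refine iUnion_subset fun n => iUnion_subset fun k => ?_
        split_ifs with h
        · exact h
        · exact empty_subset _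
    rw [key]
    refine auxFsigma_iUnion fun n => auxFsigma_iUnion fun k => ?_
    split_ifs with h
    · obtain ⟨⟨O, C, hO, hC, hPOC⟩, -⟩ := hP n k
      rw [hPOC]
      exact auxFsigma_inter_closed (auxFsigma_of_isOpen' hO) hC
    · exact auxFsigma_of_isClosed isClosed_empty
  · intro h A hA ε hε
    classical
    obtain ⟨a, haA⟩ := hA
    haveI : Nonempty Y := ⟨f a⟩
    set F : Set X := closure A with hF
    have hFc : IsClosed F := isClosed_closure
    haveI : PolishSpace F := hFc.polishSpace
    haveI : BaireSpace F := polish_baireSpace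
    haveI : Nonempty F := ⟨⟨a, subset_closure haA⟩⟩
    have hball : ∀ m : ℕ, ∃ g : ℕ → Set X, (∀ n, IsClosed (g n)) ∧
        f ⁻¹' Metric.ball (denseSeq Y m) (ε / 4) = ⋃ n, g n :=
      fun m => h _ Metric.isOpen_ball
    choose g hgc hgu using hball
    let e := Denumerable.eqv (ℕ × ℕ)
    set c : ℕ → Set F := fun k => Subtype.val ⁻¹' g (e.symm k).1 (e.symm k).2 with hc
    have hcc : ∀ k, IsClosed (c k) := fun k => (hgc _ _).preimage continuous_subtype_val
    have hcu : ⋃ k, c k = univ := by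
      apply eq_univ_of_forall
      intro z
      obtain ⟨m, hm⟩ := Metric.denseRange_iff.1 (denseRange_denseSeq Y) (f z) (ε / 4)
        (by positivity)
      have hz : (z : X) ∈ f ⁻¹' Metric.ball (denseSeq Y m) (ε / 4) := by
        rw [mem_preimage, Metric.mem_ball]
        exact hm
      rw [hgu m] at hz
      obtain ⟨n, hn⟩ := mem_iUnion.1 hz
      refine mem_iUnion.2 ⟨e (m, n), ?_⟩
      show (z : X) ∈ g (e.symm (e (m, n))).1 (e.symm (e (m, n))).2
      rw [e.symm_apply_apply]
      exact hn
    obtain ⟨k, z, hz⟩ := nonempty_interior_of_iUnion_of_closed hcc hcu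
    obtain ⟨O, hOopen, hOeq⟩ := isOpen_induced_iff.1 (isOpen_interior (s := c k))
    refine ⟨O, hOopen, ?_, ?_⟩
    · have hzO : (z : X) ∈ O := by
        have : z ∈ Subtype.val ⁻¹' O := by rw [hOeq]; exact hz
        exact this
      exact mem_closure_iff.1 z.2 O hOopen hzO
    · intro x hx y hy
      have hxF : x ∈ F := subset_closure hx.2
      have hyF : y ∈ F := subset_closure hy.2
      have hx' : (⟨x, hxF⟩ : F) ∈ interior (c k) := by
        rw [← hOeq]
        exact hx.1
      have hy' : (⟨y, hyF⟩ : F) ∈ interior (c k) := by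
        rw [← hOeq]
        exact hy.1
      have hx2' : (⟨x, hxF⟩ : F) ∈ c k := interior_subset hx'
      have hy2' : (⟨y, hyF⟩ : F) ∈ c k := interior_subset hy'
      have hx2 : x ∈ g (e.symm k).1 (e.symm k).2 := hx2'
      have hy2 : y ∈ g (e.symm k).1 (e.symm k).2 := hy2'
      have hx3 : dist (f x) (denseSeq Y (e.symm k).1) < ε / 4 := by
        have : x ∈ f ⁻¹' Metric.ball (denseSeq Y (e.symm k).1) (ε / 4) := by
          rw [hgu]
          exact mem_iUnion.2 ⟨(e.symm k).2, hx2⟩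
        exact Metric.mem_ball.1 this
      have hy3 : dist (f y) (denseSeq Y (e.symm k).1) < ε / 4 := by
        have : y ∈ f ⁻¹' Metric.ball (denseSeq Y (e.symm k).1) (ε / 4) := by
          rw [hgu]
          exact mem_iUnion.2 ⟨(e.symm k).2, hy2⟩
        exact Metric.mem_ball.1 this
      calc dist (f x) (f y) ≤ dist (f x) (denseSeq Y (e.symm k).1)
            + dist (f y) (denseSeq Y (e.symm k).1) := dist_triangle_right _ _ _
        _ < ε / 4 + ε / 4 := add_lt_add hx3 hy3
        _ ≤ ε := by linarith
end

section
/- Let X be a compact Hausdorff space and F ⊆ C(X) a norm bounded subset. If every sequence in F has a pointwise convergent subsequence (in ℝ^X), then F contains no independent sequence (i.e., F is tame). -/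
/-- Let `X` be compact Hausdorff and `F ⊆ C(X)` norm bounded. If every sequence in `F`
has a pointwise convergent subsequence, then `F` contains no independent sequence. -/
theorem tame_of_pointwise_sequentially_compact {X : Type*} [TopologicalSpace X]
    [CompactSpace X] [T2Space X] (F : Set C(X, ℝ))
    (hb : ∃ C : ℝ, ∀ f ∈ F, ‖f‖ ≤ C)
    (hseq : ∀ g : ℕ → C(X, ℝ), (∀ n, g n ∈ F) →
      ∃ φ : ℕ → ℕ, StrictMono φ ∧ ∃ h : X → ℝ,
        ∀ x, Filter.Tendsto (fun k => g (φ k) x) Filter.atTop (nhds (h x))) :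
    ¬ ∃ g : ℕ → C(X, ℝ), (∀ n, g n ∈ F) ∧ IndepSeq (fun n => (g n : X → ℝ)) := by
  rintro ⟨g, hgF, a, b, hab, hind⟩
  obtain ⟨φ, hφ, h, hconv⟩ := hseq g hgF
  set S : ℕ → Set X := fun k =>
    if Even k then {x | g (φ k) x ≤ a} else {x | b ≤ g (φ k) x} with hS
  have hSclosed : ∀ k, IsClosed (S k) := by
    intro k
    by_cases hk : Even k <;> simp only [hS, hk, if_true, if_false]
    · exact isClosed_le (g (φ k)).continuous continuous_const
    · exact isClosed_le continuous_const (g (φ k)).continuous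
  set K : ℕ → Set X := fun N => ⋂ k ∈ Finset.range (N + 1), S k with hK
  have hKclosed : ∀ N, IsClosed (K N) := fun N =>
    isClosed_biInter fun k _ => hSclosed k
  have hKmono : ∀ N, K (N + 1) ⊆ K N := by
    intro N x hx
    simp only [hK, Set.mem_iInter] at hx ⊢
    intro k hk
    exact hx k (Finset.mem_range.2 (Nat.lt_succ_of_lt (Finset.mem_range.1 hk)))
  have hKne : ∀ N, (K N).Nonempty := by
    intro N
    set P := ((Finset.range (N + 1)).filter (fun k => Even k)).image φ with hP
    set M := ((Finset.range (N + 1)).filter (fun k => ¬ Even k)).image φ with hM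
    have hdisj : Disjoint P M := by
      simp only [Finset.disjoint_left, hP, hM, Finset.mem_image, Finset.mem_filter]
      rintro n ⟨k, ⟨hk, hek⟩, rfl⟩ ⟨l, ⟨hl, hel⟩, hle⟩
      exact hel (hφ.injective hle ▸ hek)
    obtain ⟨x, hxP, hxM⟩ := hind P M hdisj
    refine ⟨x, ?_⟩
    simp only [hK, Set.mem_iInter]
    intro k hk
    by_cases hek : Even k <;> simp only [hS, hek, if_true, if_false, Set.mem_setOf_eq]
    · exact le_of_lt (hxP (φ k) (Finset.mem_image_of_mem φ (Finset.mem_filter.2 ⟨hk, hek⟩)))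
    · exact le_of_lt (hxM (φ k) (Finset.mem_image_of_mem φ (Finset.mem_filter.2 ⟨hk, hek⟩)))
  obtain ⟨x, hx⟩ := IsCompact.nonempty_iInter_of_sequence_nonempty_isCompact_isClosed
    K hKmono hKne ((hKclosed 0).isCompact) hKclosed
  have hxS : ∀ k, x ∈ S k := by
    intro k
    have := Set.mem_iInter.1 hx k
    simp only [hK, Set.mem_iInter] at this
    exact this k (Finset.mem_range.2 (Nat.lt_succ_self k))
  have heven : ∀ k : ℕ, g (φ (2 * k)) x ≤ a := by
    intro k
    have := hxS (2 * k)
    simp only [hS, even_two_mul, if_true, Set.mem_setOf_eq] at this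
    exact this
  have hodd : ∀ k : ℕ, b ≤ g (φ (2 * k + 1)) x := by
    intro k
    have := hxS (2 * k + 1)
    have hne : ¬ Even (2 * k + 1) := by simp [Nat.even_add_one, even_two_mul]
    simp only [hS, hne, if_false, Set.mem_setOf_eq] at this
    exact this
  have t2 : Filter.Tendsto (fun k : ℕ => 2 * k) Filter.atTop Filter.atTop :=
    Filter.tendsto_atTop_mono (fun n => Nat.le_mul_of_pos_left n (by norm_num))
      Filter.tendsto_id
  have t3 : Filter.Tendsto (fun k : ℕ => 2 * k + 1) Filter.atTop Filter.atTop :=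
    Filter.tendsto_atTop_mono (fun n => by simp only [id]; omega) Filter.tendsto_id
  have h1 : h x ≤ a :=
    le_of_tendsto ((hconv x).comp t2) (Filter.Eventually.of_forall heven)
  have h2 : b ≤ h x :=
    ge_of_tendsto ((hconv x).comp t3) (Filter.Eventually.of_forall hodd)
  linarith
end

section
/- Let V be a Banach space, F ⊆ V a bounded tame subset. Then the closure of F in the weak topology of V is also a tame subset of V. -/
/-- A bounded subset `F` of a Banach space `V` is *tame* if `F`, viewed as a family of
functions on the unit ball of the dual `V*`, contains no independent sequence. -/
def TameSubset {V : Type*} [NormedAddCommGroup V] [NormedSpace ℝ V] (F : Set V) : Prop :=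
  ¬ ∃ g : ℕ → V, (∀ n, g n ∈ F) ∧
    IndepSeq (fun n (ψ : {ψ : V →L[ℝ] ℝ // ‖ψ‖ ≤ 1}) => ψ.1 (g n))


open Set Function Metric

namespace TameAux

variable {V : Type*} [NormedAddCommGroup V] [NormedSpace ℝ V]

/-- The closed unit ball of the dual, as a subset of the weak-star dual. -/
def KBall (V : Type*) [NormedAddCommGroup V] [NormedSpace ℝ V] : Set (WeakDual ℝ V) :=
  WeakDual.toStrongDual ⁻¹' Metric.closedBall 0 1

lemma isCompact_KBall : IsCompact (KBall V) := WeakDual.isCompact_closedBall (0 : StrongDual ℝ V) 1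

lemma isClosed_KBall : IsClosed (KBall V) := WeakDual.isClosed_closedBall (0 : StrongDual ℝ V) 1

lemma exists_weak_approx {F : Set V} {x : V}
    (hx : toWeakSpace ℝ V x ∈ closure (toWeakSpace ℝ V '' F))
    {ι : Type*} [Finite ι] (φ : ι → (V →L[ℝ] ℝ)) {ε : ℝ} (hε : 0 < ε) :
    ∃ f ∈ F, ∀ i, |φ i f - φ i x| < ε := by
  set O : Set (WeakSpace ℝ V) :=
    ⋂ i, {w | |(topDualPairing ℝ V).flip w (φ i) - φ i x| < ε} with hO
  have hOopen : IsOpen O := by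
    refine isOpen_iInter_of_finite fun i => ?_
    have hcont : Continuous fun w : WeakSpace ℝ V =>
        |(topDualPairing ℝ V).flip w (φ i) - φ i x| :=
      (continuous_abs.comp ((WeakBilin.eval_continuous _ (φ i)).sub continuous_const))
    exact isOpen_lt hcont continuous_const
  have hmem : toWeakSpace ℝ V x ∈ O := by
    refine mem_iInter.2 fun i => ?_
    show |(topDualPairing ℝ V).flip (toWeakSpace ℝ V x) (φ i) - φ i x| < ε
    have : (topDualPairing ℝ V).flip (toWeakSpace ℝ V x) (φ i) = φ i x := rfl
    rw [this, sub_self, abs_zero]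
    exact hε
  obtain ⟨w, hwO, hwF⟩ := mem_closure_iff.1 hx O hOopen hmem
  obtain ⟨f, hfF, rfl⟩ := hwF
  refine ⟨f, hfF, fun i => ?_⟩
  have h := mem_iInter.1 hwO i
  have heq : (topDualPairing ℝ V).flip (toWeakSpace ℝ V f) (φ i) = φ i f := rfl
  simpa only [mem_setOf_eq, heq] using h

/-- The closed half conditions. -/
def SideAt (g : ℕ → V) (a b : ℝ) (i : ℕ) (ι : Bool) : Set (WeakDual ℝ V) :=
  if ι then {ψ | b ≤ ψ (g i)} else {ψ | ψ (g i) ≤ a}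

lemma isClosed_SideAt (g : ℕ → V) (a b : ℝ) (i : ℕ) (ι : Bool) :
    IsClosed (SideAt g a b i ι) := by
  cases ι <;> simp only [SideAt, if_true, if_false, Bool.false_eq_true]
  · exact isClosed_le (WeakDual.eval_continuous (g i)) continuous_const
  · exact isClosed_le continuous_const (WeakDual.eval_continuous (g i))


@[simp] lemma SideAt_true (g : ℕ → V) (a b : ℝ) (i : ℕ) :
    SideAt g a b i true = {ψ : WeakDual ℝ V | b ≤ ψ (g i)} := if_pos rfl

@[simp] lemma SideAt_false (g : ℕ → V) (a b : ℝ) (i : ℕ) :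
    SideAt g a b i false = {ψ : WeakDual ℝ V | ψ (g i) ≤ a} := if_neg (by simp)

def Side (g : ℕ → V) (a b : ℝ) (σ : ℕ → Bool) : Set (WeakDual ℝ V) :=
  ⋂ i, SideAt g a b i (σ i)

lemma isClosed_Side (g : ℕ → V) (a b : ℝ) (σ : ℕ → Bool) : IsClosed (Side g a b σ) :=
  isClosed_iInter fun i => isClosed_SideAt g a b i (σ i)

/-- The compact "two-sided" set. -/
def ZSet (g : ℕ → V) (a b : ℝ) : Set (WeakDual ℝ V) :=
  KBall V ∩ ⋂ i, (SideAt g a b i false ∪ SideAt g a b i true)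

lemma isClosed_ZSet (g : ℕ → V) (a b : ℝ) : IsClosed (ZSet g a b) :=
  isClosed_KBall.inter (isClosed_iInter fun i =>
    ((isClosed_SideAt g a b i false).union (isClosed_SideAt g a b i true)))

lemma isCompact_ZSet (g : ℕ → V) (a b : ℝ) : IsCompact (ZSet g a b) :=
  isCompact_KBall.of_isClosed_subset (isClosed_ZSet g a b) inter_subset_left

/-- Candidate closed subsets: closed subsets of `ZSet` meeting every pattern set. -/
def Cand (g : ℕ → V) (a b : ℝ) : Set (Set (WeakDual ℝ V)) :=
  {C | C ⊆ ZSet g a b ∧ IsClosed C ∧ ∀ σ : ℕ → Bool, (C ∩ Side g a b σ).Nonempty}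


section Indep

variable {g : ℕ → V} {a b : ℝ}

/-- From the independence of `g`, every pattern set meets `ZSet`. -/
lemma ZSet_mem_Cand (hab : a < b)
    (hind : ∀ P M : Finset ℕ, Disjoint P M →
      ∃ x : {ψ : V →L[ℝ] ℝ // ‖ψ‖ ≤ 1}, (∀ n ∈ P, x.1 (g n) < a) ∧ (∀ n ∈ M, b < x.1 (g n))) :
    ZSet g a b ∈ Cand g a b := by
  refine ⟨Subset.rfl, isClosed_ZSet g a b, fun σ => ?_⟩
  -- the finite stage sets
  set C : ℕ → Set (WeakDual ℝ V) :=
    fun k => KBall V ∩ ⋂ i ∈ Finset.range k, SideAt g a b i (σ i) with hC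
  have hCclosed : ∀ k, IsClosed (C k) := fun k =>
    isClosed_KBall.inter (isClosed_biInter fun i _ => isClosed_SideAt g a b i (σ i))
  have hCcompact : ∀ k, IsCompact (C k) := fun k =>
    isCompact_KBall.of_isClosed_subset (hCclosed k) inter_subset_left
  have hCanti : ∀ {k l}, k ≤ l → C l ⊆ C k := by
    intro k l hkl
    refine inter_subset_inter Subset.rfl ?_
    intro ψ hψ
    simp only [mem_iInter] at hψ ⊢
    intro i hi
    exact hψ i (Finset.mem_range.2 <| lt_of_lt_of_le (Finset.mem_range.1 hi) hkl)
  have hCne : ∀ k, (C k).Nonempty := by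
    intro k
    obtain ⟨x, hxP, hxM⟩ := hind ((Finset.range k).filter (fun i => σ i = false))
      ((Finset.range k).filter (fun i => σ i = true))
      (by
        simp only [Finset.disjoint_left, Finset.mem_filter]
        rintro i ⟨-, h0⟩ ⟨-, h1⟩
        simp [h0] at h1)
    refine ⟨(x.1 : WeakDual ℝ V), ?_, ?_⟩
    · simp only [KBall, mem_preimage, Metric.mem_closedBall, dist_zero_right]
      exact (Metric.mem_closedBall.2 (by rw [dist_zero_right]; exact x.2) : x.1 ∈ Metric.closedBall (0 : StrongDual ℝ V) 1)
    · refine mem_iInter₂.2 ?_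
      intro i hi
      cases h : σ i with
      | false =>
        have := hxP i (Finset.mem_filter.2 ⟨hi, h⟩)
        rw [SideAt_false]
        exact le_of_lt this
      | true =>
        have := hxM i (Finset.mem_filter.2 ⟨hi, h⟩)
        rw [SideAt_true]
        exact le_of_lt this
  have hmain : (⋂ k, C k).Nonempty := by
    refine IsCompact.nonempty_iInter_of_directed_nonempty_isCompact_isClosed C ?_ hCne hCcompact
      hCclosed
    intro k l
    exact ⟨max k l, hCanti (le_max_left _ _), hCanti (le_max_right _ _)⟩
  obtain ⟨ψ, hψ⟩ := hmain
  have hψK : ψ ∈ KBall V := (mem_iInter.1 hψ 0).1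
  have hψS : ∀ i, ψ ∈ SideAt g a b i (σ i) := by
    intro i
    have := (mem_iInter.1 hψ (i + 1)).2
    simp only [mem_iInter] at this
    exact this i (Finset.mem_range.2 (Nat.lt_succ_self i))
  refine ⟨ψ, ⟨hψK, ?_⟩, ?_⟩
  · simp only [mem_iInter]
    intro i
    cases h : σ i with
    | false => exact mem_union_left _ (by rw [← h]; exact hψS i)
    | true => exact mem_union_right _ (by rw [← h]; exact hψS i)
  · exact mem_iInter.2 hψS


/-- Zorn's lemma: a minimal candidate set exists. -/
lemma exists_minimal_Cand (hZ : ZSet g a b ∈ Cand g a b) :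
    ∃ T, T ∈ Cand g a b ∧ ∀ C ∈ Cand g a b, C ⊆ T → C = T := by
  have hchainCond : ∀ c ⊆ Cand g a b, IsChain (· ⊆ ·) c → c.Nonempty →
      ∃ lb ∈ Cand g a b, ∀ s ∈ c, lb ⊆ s := by
    intro c hcC hchain hcne
    refine ⟨⋂₀ c, ⟨?_, ?_, ?_⟩, fun s hs => sInter_subset_of_mem hs⟩
    · obtain ⟨s, hs⟩ := hcne
      exact (sInter_subset_of_mem hs).trans (hcC hs).1
    · exact isClosed_sInter fun s hs => (hcC hs).2.1
    · intro σ
      -- directed intersection of nonempty compacts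
      have : Nonempty c := hcne.to_subtype
      have key : (⋂ s : c, ((s : Set (WeakDual ℝ V)) ∩ Side g a b σ)).Nonempty := by
        refine IsCompact.nonempty_iInter_of_directed_nonempty_isCompact_isClosed _ ?_ ?_ ?_ ?_
        · rintro ⟨s, hs⟩ ⟨t, ht⟩
          rcases hchain.total hs ht with h | h
          · exact ⟨⟨s, hs⟩, Subset.rfl, inter_subset_inter_left _ h⟩
          · exact ⟨⟨t, ht⟩, inter_subset_inter_left _ h, Subset.rfl⟩
        · rintro ⟨s, hs⟩
          exact (hcC hs).2.2 σ
        · rintro ⟨s, hs⟩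
          exact ((isCompact_ZSet g a b).of_isClosed_subset (hcC hs).2.1 (hcC hs).1).inter_right
            (isClosed_Side g a b σ)
        · rintro ⟨s, hs⟩
          exact (hcC hs).2.1.inter (isClosed_Side g a b σ)
      obtain ⟨ψ, hψ⟩ := key
      simp only [mem_iInter, mem_inter_iff] at hψ
      exact ⟨ψ, mem_sInter.2 fun s hs => (hψ ⟨s, hs⟩).1,
        (hψ ⟨_, hcne.choose_spec⟩).2⟩
  obtain ⟨m, -, hm⟩ := zorn_superset_nonempty (Cand g a b) hchainCond _ hZ
  exact ⟨m, hm.prop, fun C hC hCm => hm.eq_of_subset hC hCm⟩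

/-- The key hereditary property of a minimal candidate: every open set meeting it
contains witnesses for both sides of `g s` for all large `s`. -/
lemma hereditary {T : Set (WeakDual ℝ V)} (hT : T ∈ Cand g a b)
    (hmin : ∀ C ∈ Cand g a b, C ⊆ T → C = T)
    {U : Set (WeakDual ℝ V)} (hU : IsOpen U) (hne : (U ∩ T).Nonempty) :
    ∃ m : ℕ, ∀ s, m ≤ s → ∀ ι : Bool, ∃ ζ, ζ ∈ U ∩ T ∧ ζ ∈ SideAt g a b s ι := by
  classical
  set TU := T \ U with hTU
  have hTUclosed : IsClosed TU := hT.2.1.sdiff hU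
  have hTUZ : TU ⊆ ZSet g a b := (diff_subset).trans hT.1
  have hTUcompact : IsCompact TU :=
    (isCompact_ZSet g a b).of_isClosed_subset hTUclosed hTUZ
  -- TU is not a candidate (it is a proper closed subset)
  have hTUnot : ¬ (∀ σ : ℕ → Bool, (TU ∩ Side g a b σ).Nonempty) := by
    intro hsurj
    have : TU ∈ Cand g a b := ⟨hTUZ, hTUclosed, hsurj⟩
    have hEq : TU = T := hmin TU this diff_subset
    obtain ⟨ζ, hζU, hζT⟩ := hne
    rw [← hEq] at hζT
    exact hζT.2 hζU
  push_neg at hTUnot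
  obtain ⟨σstar, hσstar⟩ := hTUnot
  -- key claim: updates of σstar far out also miss TU
  have key : ∃ m : ℕ, ∀ s, m ≤ s → ∀ ι : Bool,
      TU ∩ Side g a b (Function.update σstar s ι) = ∅ := by
    by_contra hcon
    push_neg at hcon
    -- choose witnesses
    have choice : ∀ m : ℕ, ∃ p : ℕ × Bool × WeakDual ℝ V,
        m ≤ p.1 ∧ p.2.2 ∈ TU ∩ Side g a b (Function.update σstar p.1 p.2.1) := by
      intro m
      obtain ⟨s, hms, ι, hι⟩ := hcon m
      obtain ⟨ζ, hζ⟩ := hι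
      exact ⟨⟨s, ι, ζ⟩, hms, hζ⟩
    choose p hp1 hp2 using choice
    -- cluster point argument
    set E : ℕ → Set (WeakDual ℝ V) :=
      fun j => TU ∩ closure {ζ | ∃ m, j ≤ m ∧ ζ = (p m).2.2} with hE
    have hEclosed : ∀ j, IsClosed (E j) := fun j => hTUclosed.inter isClosed_closure
    have hEne : ∀ j, (E j).Nonempty :=
      fun j => ⟨(p j).2.2, (hp2 j).1, subset_closure ⟨j, le_rfl, rfl⟩⟩
    have hEcompact : ∀ j, IsCompact (E j) :=
      fun j => hTUcompact.of_isClosed_subset (hEclosed j) inter_subset_left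
    have hEanti : ∀ {j l}, j ≤ l → E l ⊆ E j := by
      intro j l hjl
      refine inter_subset_inter Subset.rfl (closure_mono ?_)
      rintro ζ ⟨m, hlm, rfl⟩
      exact ⟨m, hjl.trans hlm, rfl⟩
    have hmain : (⋂ j, E j).Nonempty := by
      refine IsCompact.nonempty_iInter_of_directed_nonempty_isCompact_isClosed E ?_ hEne
        hEcompact hEclosed
      intro j l
      exact ⟨max j l, hEanti (le_max_left _ _), hEanti (le_max_right _ _)⟩
    obtain ⟨ζ, hζ⟩ := hmain
    have hζTU : ζ ∈ TU := (mem_iInter.1 hζ 0).1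
    have hζside : ∀ i, ζ ∈ SideAt g a b i (σstar i) := by
      intro i
      have h1 : ζ ∈ closure {ξ | ∃ m, i + 1 ≤ m ∧ ξ = (p m).2.2} := (mem_iInter.1 hζ (i + 1)).2
      have h2 : {ξ : WeakDual ℝ V | ∃ m, i + 1 ≤ m ∧ ξ = (p m).2.2} ⊆
          SideAt g a b i (σstar i) := by
        rintro ξ ⟨m, him, rfl⟩
        have hsm : i < (p m).1 := lt_of_lt_of_le (Nat.lt_succ_self i) (him.trans (hp1 m))
        have := (hp2 m).2
        have hmem : (p m).2.2 ∈ SideAt g a b i (Function.update σstar (p m).1 (p m).2.1 i) :=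
          mem_iInter.1 this i
        rwa [Function.update_of_ne (Nat.ne_of_lt hsm)] at hmem
      exact closure_minimal h2 (isClosed_SideAt g a b i (σstar i)) h1
    have : ζ ∈ TU ∩ Side g a b σstar := ⟨hζTU, mem_iInter.2 hζside⟩
    rw [hσstar] at this
    exact this
  obtain ⟨m, hm⟩ := key
  refine ⟨m, fun s hms ι => ?_⟩
  obtain ⟨ζ, hζT, hζS⟩ := hT.2.2 (Function.update σstar s ι)
  have hζside : ζ ∈ SideAt g a b s ι := by
    have := mem_iInter.1 hζS s
    rwa [Function.update_self] at this
  have hζU : ζ ∈ U := by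
    by_contra hcU
    have : ζ ∈ TU ∩ Side g a b (Function.update σstar s ι) := ⟨⟨hζT, hcU⟩, hζS⟩
    rw [hm s hms ι] at this
    exact this
  exact ⟨ζ, ⟨hζU, hζT⟩, hζside⟩



/-- The sets tracking the behaviour of the constructed sequence. -/
def Usel (f : ℕ → V) (A B : ℝ) (i : ℕ) (ι : Bool) : Set (WeakDual ℝ V) :=
  if ι then {ψ | B < ψ (f i)} else {ψ | ψ (f i) < A}

lemma isOpen_Usel (f : ℕ → V) (A B : ℝ) (i : ℕ) (ι : Bool) : IsOpen (Usel f A B i ι) := by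
  cases ι
  · exact isOpen_lt (WeakDual.eval_continuous (f i)) continuous_const
  · exact isOpen_lt continuous_const (WeakDual.eval_continuous (f i))

lemma Usel_congr {f f' : ℕ → V} (i : ℕ) (h : f i = f' i) (A B : ℝ) (ι : Bool) :
    Usel f A B i ι = Usel f' A B i ι := by
  unfold Usel
  rw [h]

def UU (f : ℕ → V) (A B : ℝ) (k : ℕ) (τ : Fin k → Bool) : Set (WeakDual ℝ V) :=
  ⋂ i : Fin k, Usel f A B i.1 (τ i)

lemma isOpen_UU (f : ℕ → V) (A B : ℝ) (k : ℕ) (τ : Fin k → Bool) : IsOpen (UU f A B k τ) :=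
  isOpen_iInter_of_finite fun i => isOpen_Usel f A B i.1 (τ i)

lemma UU_congr {f f' : ℕ → V} {k : ℕ} (h : ∀ i < k, f i = f' i) (A B : ℝ) (τ : Fin k → Bool) :
    UU f A B k τ = UU f' A B k τ := by
  unfold UU
  exact iInter_congr fun i => Usel_congr i.1 (h i.1 i.2) A B (τ i)

/-- The inductive construction step. -/
lemma step_lemma {T : Set (WeakDual ℝ V)} {F : Set V}
    (hT : T ∈ Cand g a b) (hmin : ∀ C ∈ Cand g a b, C ⊆ T → C = T)
    (hgS : ∀ n, toWeakSpace ℝ V (g n) ∈ closure (toWeakSpace ℝ V '' F))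
    {ε : ℝ} (hε : 0 < ε) (k : ℕ) (f : ℕ → V)
    (hInv : ∀ τ : Fin k → Bool, (UU f (a + ε) (b - ε) k τ ∩ T).Nonempty) :
    ∃ v ∈ F, ∀ τ : Fin (k + 1) → Bool,
      (UU (Function.update f k v) (a + ε) (b - ε) (k + 1) τ ∩ T).Nonempty := by
  classical
  set A := a + ε with hA
  set B := b - ε with hB
  -- apply the hereditary lemma to each of the finitely many pattern sets
  have H : ∀ τ : Fin k → Bool, ∃ m : ℕ, ∀ s, m ≤ s → ∀ ι : Bool,
      ∃ ζ, ζ ∈ UU f A B k τ ∩ T ∧ ζ ∈ SideAt g a b s ι :=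
    fun τ => hereditary hT hmin (isOpen_UU f A B k τ) (hInv τ)
  choose m hm using H
  set s := (Finset.univ : Finset (Fin k → Bool)).sup m with hs
  have hsle : ∀ τ, m τ ≤ s := fun τ => Finset.le_sup (Finset.mem_univ τ)
  have W : ∀ q : (Fin k → Bool) × Bool,
      ∃ ζ, ζ ∈ UU f A B k q.1 ∩ T ∧ ζ ∈ SideAt g a b s q.2 :=
    fun q => hm q.1 s (hsle q.1) q.2
  choose ζ hζ1 hζ2 using W
  -- weak approximation of g s at the finitely many witnesses
  obtain ⟨v, hvF, hv⟩ := exists_weak_approx (hgS s)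
    (fun q : (Fin k → Bool) × Bool => WeakDual.toStrongDual (ζ q)) hε
  refine ⟨v, hvF, fun τ' => ?_⟩
  set τ : Fin k → Bool := τ' ∘ Fin.castSucc with hτ
  set ι : Bool := τ' (Fin.last k) with hι
  refine ⟨ζ (τ, ι), ?_, (hζ1 (τ, ι)).2⟩
  refine mem_iInter.2 fun i => ?_
  refine Fin.lastCases ?_ ?_ i
  · -- the new coordinate
    have happrox := hv (τ, ι)
    simp only [WeakDual.toStrongDual_apply] at happrox
    have hupdate : Function.update f k v k = v := Function.update_self k v f
    have hside := hζ2 (τ, ι)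
    set ξ := ζ (τ, ι) with hξ
    have habs := abs_lt.1 happrox
    show ξ ∈ Usel (Function.update f k v) A B (Fin.last k).1 (τ' (Fin.last k))
    rw [show ((Fin.last k).1 : ℕ) = k from rfl, ← hι]
    cases hcase : ι
    · rw [hcase, SideAt_false] at hside
      have hside' : ξ (g s) ≤ a := hside
      unfold Usel
      rw [if_neg (by simp), hupdate]
      show ξ v < A
      rw [hA]
      linarith [habs.2]
    · rw [hcase, SideAt_true] at hside
      have hside' : b ≤ ξ (g s) := hside
      unfold Usel
      rw [if_pos rfl, hupdate]
      show B < ξ v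
      rw [hB]
      linarith [habs.1]
  · -- the old coordinates
    intro j
    have hmem := mem_iInter.1 (hζ1 (τ, ι)).1 j
    have hne : (j.castSucc).1 ≠ k := by
      have := j.2
      simp only [Fin.coe_castSucc]
      omega
    have hupdate : Function.update f k v (j.castSucc).1 = f (j.castSucc).1 :=
      Function.update_of_ne hne v f
    show ζ (τ, ι) ∈ Usel (Function.update f k v) A B (j.castSucc).1 (τ' j.castSucc)
    rw [Usel_congr (j.castSucc).1 hupdate A B (τ' j.castSucc)]
    have : τ' j.castSucc = τ j := rfl
    rw [this]
    exact hmem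



/-- Main auxiliary result: an independent sequence in the weak closure of `F`
yields an independent sequence in `F`. -/
lemma exists_indep_in_F {F : Set V}
    (hgS : ∀ n, toWeakSpace ℝ V (g n) ∈ closure (toWeakSpace ℝ V '' F))
    (hab : a < b)
    (hind : ∀ P M : Finset ℕ, Disjoint P M →
      ∃ x : {ψ : V →L[ℝ] ℝ // ‖ψ‖ ≤ 1}, (∀ n ∈ P, x.1 (g n) < a) ∧ (∀ n ∈ M, b < x.1 (g n))) :
    ∃ f : ℕ → V, (∀ n, f n ∈ F) ∧
      IndepSeq (fun n (ψ : {ψ : V →L[ℝ] ℝ // ‖ψ‖ ≤ 1}) => ψ.1 (f n)) := by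
  classical
  obtain ⟨T, hT, hmin⟩ := exists_minimal_Cand (ZSet_mem_Cand hab hind)
  set ε : ℝ := (b - a) / 3 with hεdef
  have hε : 0 < ε := by rw [hεdef]; linarith
  set A : ℝ := a + ε with hA
  set B : ℝ := b - ε with hB
  have hAB : A < B := by rw [hA, hB, hεdef]; linarith
  have hTne : T.Nonempty := by
    obtain ⟨ζ, hζ⟩ := hT.2.2 (fun _ => false)
    exact ⟨ζ, hζ.1⟩
  -- the invariant
  set InvP : (ℕ → V) → ℕ → Prop := fun p k =>
    (∀ i, i < k → p i ∈ F) ∧ ∀ τ : Fin k → Bool, (UU p A B k τ ∩ T).Nonempty with hInvP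
  have hstep : ∀ k (p : ℕ → V), InvP p k →
      ∃ v, v ∈ F ∧ InvP (Function.update p k v) (k + 1) := by
    intro k p hp
    obtain ⟨v, hvF, hvInv⟩ := step_lemma hT hmin hgS hε k p hp.2
    refine ⟨v, hvF, ⟨?_, hvInv⟩⟩
    intro i hi
    rcases Nat.lt_succ_iff_lt_or_eq.1 hi with hik | rfl
    · rw [Function.update_of_ne (Nat.ne_of_lt hik)]
      exact hp.1 i hik
    · rw [Function.update_self]
      exact hvF
  choose vf hvf using hstep
  -- the recursively defined sequence of approximations
  set G : ℕ → (ℕ → V) := fun k => Nat.rec (fun _ => g 0)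
    (fun k prev => if h : InvP prev k then Function.update prev k (vf k prev h) else prev) k
    with hG
  have hG0 : InvP (G 0) 0 := by
    constructor
    · intro i hi; omega
    · intro τ
      have : UU (G 0) A B 0 τ = univ := by
        unfold UU
        exact iInter_of_empty _
      rw [this, univ_inter]
      exact hTne
  have hGstep : ∀ k, InvP (G k) k →
      InvP (G (k + 1)) (k + 1) ∧ ∀ i, i < k → G (k + 1) i = G k i := by
    intro k hk
    have hGk1 : G (k + 1) = Function.update (G k) k (vf k (G k) hk) := by
      show (if h : InvP (G k) k then Function.update (G k) k (vf k (G k) h) else G k) = _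
      rw [dif_pos hk]
    constructor
    · rw [hGk1]; exact (hvf k (G k) hk).2
    · intro i hi
      rw [hGk1, Function.update_of_ne (Nat.ne_of_lt hi)]
  have hGInv : ∀ k, InvP (G k) k := by
    intro k
    induction k with
    | zero => exact hG0
    | succ k ih => exact (hGstep k ih).1
  -- the final sequence
  set f : ℕ → V := fun n => G (n + 1) n with hf
  have hagree : ∀ k n, n < k → G k n = f n := by
    intro k
    induction k with
    | zero => intro n hn; omega
    | succ k ih =>
      intro n hn
      rcases Nat.lt_succ_iff_lt_or_eq.1 hn with hnk | rfl
      · rw [(hGstep k (hGInv k)).2 n hnk]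
        exact ih n hnk
      · rfl
  have hfF : ∀ n, f n ∈ F := fun n => (hGInv (n + 1)).1 n (Nat.lt_succ_self n)
  have hfInv : ∀ (k : ℕ) (τ : Fin k → Bool), (UU f A B k τ ∩ T).Nonempty := by
    intro k τ
    rw [← UU_congr (fun i hi => hagree k i hi) A B τ]
    exact (hGInv k).2 τ
  -- conclusion
  refine ⟨f, hfF, A, B, hAB, ?_⟩
  intro P M hPM
  set k : ℕ := (P ∪ M).sup id + 1 with hk
  have hlt : ∀ n ∈ P ∪ M, n < k := by
    intro n hn
    have h2 : n ≤ (P ∪ M).sup id := Finset.le_sup (f := id) hn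
    omega
  set τ : Fin k → Bool := fun i => decide (i.1 ∈ M) with hτ
  obtain ⟨ζ, hζU, hζT⟩ := hfInv k τ
  have hζK : ζ ∈ KBall V := (hT.1 hζT).1
  have hnorm : ‖WeakDual.toStrongDual ζ‖ ≤ 1 := by
    simpa only [KBall, mem_preimage, Metric.mem_closedBall, dist_zero_right] using hζK
  refine ⟨⟨WeakDual.toStrongDual ζ, hnorm⟩, ?_, ?_⟩
  · intro n hn
    have hnk : n < k := hlt n (Finset.mem_union_left M hn)
    have hτn : τ ⟨n, hnk⟩ = false := by
      simp only [hτ, decide_eq_false_iff_not]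
      exact Finset.disjoint_left.1 hPM hn
    have := mem_iInter.1 hζU ⟨n, hnk⟩
    rw [hτn] at this
    unfold Usel at this
    rw [if_neg (by simp)] at this
    exact this
  · intro n hn
    have hnk : n < k := hlt n (Finset.mem_union_right P hn)
    have hτn : τ ⟨n, hnk⟩ = true := by
      simp only [hτ, decide_eq_true_eq]
      exact hn
    have := mem_iInter.1 hζU ⟨n, hnk⟩
    rw [hτn] at this
    unfold Usel at this
    rw [if_pos rfl] at this
    exact this

end Indep

end TameAux

/-- The closure of a bounded tame subset of a Banach space in the weak topology is tame. -/
theorem tame_weak_closure {V : Type*} [NormedAddCommGroup V] [NormedSpace ℝ V]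
    [CompleteSpace V] (F : Set V) (hb : ∃ C : ℝ, ∀ v ∈ F, ‖v‖ ≤ C) (hF : TameSubset F) :
    TameSubset {v : V | toWeakSpace ℝ V v ∈ closure (toWeakSpace ℝ V '' F)} := by
  rintro ⟨g, hgS, hIndep⟩
  obtain ⟨a, b, hab, hind⟩ := hIndep
  exact hF (TameAux.exists_indep_in_F hgS hab hind)
end
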